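/- Let $h : \overline{B^+} \to \mathbb{R}$ be a function on the closed upper half-ball $\overline{B^+} = \{x \in \mathbb{R}^n : |x| \leq r, x_n \geq 0\}$, continuous on $\overline{B^+}$, twice differentiable with $\Delta h \leq 0$ and $h > 0$ on the open upper half-ball, and with $h = 0$ on the flat boundary portion $\{|x| < r, x_n = 0\}$. Then the outward normal derivative $-\partial h/\partial x_n$ at the origin is strictly negative, i.e., $\partial h / \partial x_n (0) > 0$. -/

import Mathlib

open Topology

open Finset in
/-- derivative of the squared distance `x ↦ ∑ (x i - p i)^2` -/
lemma hopf_sq_hasFDerivAt {N : ℕ} (p x : EuclideanSpace ℝ (Fin N)) :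
    HasFDerivAt (fun y : EuclideanSpace ℝ (Fin N) => ∑ i, (y i - p i)^2)
      (∑ i, ((2:ℝ) * (x i - p i)) • (EuclideanSpace.proj i : EuclideanSpace ℝ (Fin N) →L[ℝ] ℝ)) x := by
  apply HasFDerivAt.fun_sum
  intro i _
  have h1 : HasFDerivAt (fun y : EuclideanSpace ℝ (Fin N) => y i - p i)
      (EuclideanSpace.proj i : EuclideanSpace ℝ (Fin N) →L[ℝ] ℝ) x := by
    show HasFDerivAt (fun y : EuclideanSpace ℝ (Fin N) =>
      (EuclideanSpace.proj i : EuclideanSpace ℝ (Fin N) →L[ℝ] ℝ) y - p i) _ x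
    exact ((EuclideanSpace.proj (𝕜 := ℝ) i).hasFDerivAt (x := x)).sub_const (p i)
  have h2 := h1.mul h1
  have he : (fun y : EuclideanSpace ℝ (Fin N) => (y i - p i)^2)
      = fun y => (y i - p i) * (y i - p i) := by ext y; ring
  rw [he]
  refine h2.congr_fderiv ?_
  rw [two_mul, add_smul]

lemma hopf_sqD_apply {N : ℕ} (p x : EuclideanSpace ℝ (Fin N)) (j : Fin N) :
    (∑ i, ((2:ℝ) * (x i - p i)) • (EuclideanSpace.proj i : EuclideanSpace ℝ (Fin N) →L[ℝ] ℝ))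
      (EuclideanSpace.single j 1) = 2 * (x j - p j) := by
  simp [ContinuousLinearMap.sum_apply, EuclideanSpace.single_apply]

noncomputable def hopfD {N : ℕ} (p x : EuclideanSpace ℝ (Fin N)) :
    EuclideanSpace ℝ (Fin N) →L[ℝ] ℝ :=
  ∑ i, ((2:ℝ) * (x i - p i)) • (EuclideanSpace.proj i : EuclideanSpace ℝ (Fin N) →L[ℝ] ℝ)

lemma hopf_v_hasFDerivAt {N : ℕ} (p x : EuclideanSpace ℝ (Fin N)) (α C : ℝ) :
    HasFDerivAt (fun y : EuclideanSpace ℝ (Fin N) =>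
        Real.exp (-α * ∑ i, (y i - p i)^2) - C)
      ((Real.exp (-α * ∑ i, (x i - p i)^2) * (-α)) • hopfD p x) x := by
  have h1 := (hopf_sq_hasFDerivAt p x).const_mul (-α)
  have h2 := h1.exp
  have h3 := h2.sub_const C
  refine h3.congr_fderiv ?_
  simp only [hopfD, smul_smul]

lemma hopf_fderiv_v_apply {N : ℕ} (p x : EuclideanSpace ℝ (Fin N)) (α C : ℝ) (j : Fin N) :
    fderiv ℝ (fun y : EuclideanSpace ℝ (Fin N) =>
        Real.exp (-α * ∑ i, (y i - p i)^2) - C) x (EuclideanSpace.single j 1)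
      = Real.exp (-α * ∑ i, (x i - p i)^2) * (-2 * α * (x j - p j)) := by
  rw [(hopf_v_hasFDerivAt p x α C).fderiv]
  have := hopf_sqD_apply p x j
  simp only [ContinuousLinearMap.coe_smul', Pi.smul_apply, hopfD, smul_eq_mul, this]
  ring

lemma hopf_lap_v {N : ℕ} (p x : EuclideanSpace ℝ (Fin N)) (α C : ℝ) :
    ∑ j : Fin N, fderiv ℝ (fun y : EuclideanSpace ℝ (Fin N) =>
        fderiv ℝ (fun z : EuclideanSpace ℝ (Fin N) =>
          Real.exp (-α * ∑ i, (z i - p i)^2) - C) y (EuclideanSpace.single j 1))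
      x (EuclideanSpace.single j 1)
    = Real.exp (-α * ∑ i, (x i - p i)^2)
        * (4*α^2 * (∑ i, (x i - p i)^2) - 2*α*N) := by
  have key : ∀ j : Fin N,
      fderiv ℝ (fun y : EuclideanSpace ℝ (Fin N) =>
        fderiv ℝ (fun z : EuclideanSpace ℝ (Fin N) =>
          Real.exp (-α * ∑ i, (z i - p i)^2) - C) y (EuclideanSpace.single j 1))
      x (EuclideanSpace.single j 1)
      = Real.exp (-α * ∑ i, (x i - p i)^2) * (4*α^2*(x j - p j)^2) -
          Real.exp (-α * ∑ i, (x i - p i)^2) * (2*α) := by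
    intro j
    have hfun : (fun y : EuclideanSpace ℝ (Fin N) =>
        fderiv ℝ (fun z : EuclideanSpace ℝ (Fin N) =>
          Real.exp (-α * ∑ i, (z i - p i)^2) - C) y (EuclideanSpace.single j 1))
        = (fun y : EuclideanSpace ℝ (Fin N) =>
            Real.exp (-α * ∑ i, (y i - p i)^2) * (-2 * α * (y j - p j))) := by
      funext y; exact hopf_fderiv_v_apply p y α C j
    have ha : HasFDerivAt (fun y : EuclideanSpace ℝ (Fin N) =>
        Real.exp (-α * ∑ i, (y i - p i)^2))
        ((Real.exp (-α * ∑ i, (x i - p i)^2) * (-α)) • hopfD p x) x := by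
      simpa using hopf_v_hasFDerivAt p x α 0
    have hb : HasFDerivAt (fun y : EuclideanSpace ℝ (Fin N) => -2 * α * (y j - p j))
        ((-2 * α) • (EuclideanSpace.proj j : EuclideanSpace ℝ (Fin N) →L[ℝ] ℝ)) x := by
      have h1 : HasFDerivAt (fun y : EuclideanSpace ℝ (Fin N) => y j - p j)
          (EuclideanSpace.proj j : EuclideanSpace ℝ (Fin N) →L[ℝ] ℝ) x := by
        show HasFDerivAt (fun y : EuclideanSpace ℝ (Fin N) =>
          (EuclideanSpace.proj (𝕜 := ℝ) j : EuclideanSpace ℝ (Fin N) →L[ℝ] ℝ) y - p j) _ x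
        exact ((EuclideanSpace.proj (𝕜 := ℝ) j).hasFDerivAt (x := x)).sub_const (p j)
      simpa [smul_smul] using h1.const_mul (-2 * α)
    have hg := ha.mul hb
    rw [hfun, show (fun y : EuclideanSpace ℝ (Fin N) =>
        Real.exp (-α * ∑ i, (y i - p i)^2) * (-2 * α * (y j - p j)))
        = (fun y : EuclideanSpace ℝ (Fin N) => Real.exp (-α * ∑ i, (y i - p i)^2))
          * (fun y : EuclideanSpace ℝ (Fin N) => -2 * α * (y j - p j)) from rfl, hg.fderiv]
    have hD := hopf_sqD_apply p x j
    simp only [ContinuousLinearMap.add_apply, ContinuousLinearMap.coe_smul', Pi.smul_apply,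
      smul_eq_mul, hD]
    rw [show (hopfD p x) (EuclideanSpace.single j 1) = 2 * (x j - p j) from hD]
    have : (EuclideanSpace.proj (𝕜 := ℝ) j : EuclideanSpace ℝ (Fin N) →L[ℝ] ℝ)
        (EuclideanSpace.single j 1) = 1 := by
      simp [EuclideanSpace.single_apply]
    rw [this]
    ring
  rw [Finset.sum_congr rfl fun j _ => key j]
  rw [Finset.sum_sub_distrib, ← Finset.mul_sum, ← Finset.mul_sum, Finset.sum_const,
    Finset.card_univ, Fintype.card_fin, nsmul_eq_mul]
  ring

lemma hopf_slope_nonneg {φ : ℝ → ℝ} {D δ : ℝ} (hδ : 0 < δ) (h0 : φ 0 = 0)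
    (hφ : ∀ t, 0 < t → t < δ → 0 ≤ φ t)
    (hD : HasDerivWithinAt φ D (Set.Ici 0) 0) : 0 ≤ D := by
  rw [hasDerivWithinAt_iff_tendsto_slope] at hD
  have hset : Set.Ici (0:ℝ) \ {0} = Set.Ioi 0 := by
    ext t; simp [Set.mem_diff, lt_iff_le_and_ne, eq_comm]
  rw [hset] at hD
  refine ge_of_tendsto hD ?_
  have hmem : Set.Ioo (0:ℝ) δ ∈ 𝓝[>] (0:ℝ) := Ioo_mem_nhdsGT_of_mem ⟨le_refl _, hδ⟩
  filter_upwards [hmem] with t ht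
  rw [slope_def_field, h0, sub_zero, sub_zero]
  exact div_nonneg (hφ t ht.1 ht.2) ht.1.le

lemma hopf_second_deriv_nonneg {φ ψ : ℝ → ℝ} {c δ : ℝ} (hδ : 0 < δ)
    (hd : ∀ t : ℝ, |t| < δ → HasDerivAt φ (ψ t) t)
    (hψ : HasDerivAt ψ c 0) (hmin : IsLocalMin φ 0) : 0 ≤ c := by
  by_contra hc
  push_neg at hc
  have hψ0 : ψ 0 = 0 := hmin.hasDerivAt_eq_zero (hd 0 (by simpa using hδ))
  -- ψ is negative on a right neighbourhood of 0
  have hev : ∀ᶠ t in 𝓝[>] (0:ℝ), ψ t < 0 := by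
    have hT : Filter.Tendsto (slope ψ 0) (𝓝[≠] (0:ℝ)) (𝓝 c) :=
      hasDerivAt_iff_tendsto_slope.mp hψ
    have hT' : Filter.Tendsto (slope ψ 0) (𝓝[>] (0:ℝ)) (𝓝 c) :=
      hT.mono_left (nhdsWithin_mono _ (fun t ht => ne_of_gt ht))
    have hsl : ∀ᶠ t in 𝓝[>] (0:ℝ), slope ψ 0 t < 0 := hT'.eventually (gt_mem_nhds hc)
    filter_upwards [hsl, self_mem_nhdsWithin] with t hst (htpos : 0 < t)
    rw [slope_def_field, hψ0, sub_zero, sub_zero, div_neg_iff] at hst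
    rcases hst with ⟨h1, h2⟩ | ⟨h1, h2⟩
    · exact absurd h2 (not_lt.mpr htpos.le)
    · exact h1
  obtain ⟨ε, hε, hsub⟩ := mem_nhdsGT_iff_exists_Ioo_subset.mp hev
  obtain ⟨δ', hδ', hmin'⟩ := Metric.eventually_nhds_iff.mp hmin
  set t0 : ℝ := min (min ε δ) δ' / 2 with ht0def
  have hεpos : (0:ℝ) < ε := hε
  have ht0pos : 0 < t0 := by positivity
  have ht0ε : t0 < ε := by
    have : t0 ≤ ε / 2 := by
      apply div_le_div_of_nonneg_right ?_ ?_ |>.trans_eq rfl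
      · exact le_trans (min_le_left _ _) (min_le_left _ _)
      · norm_num
    linarith
  have ht0δ : t0 < δ := by
    have : min (min ε δ) δ' ≤ δ := le_trans (min_le_left _ _) (min_le_right _ _)
    linarith
  have ht0δ' : t0 < δ' := by
    have : min (min ε δ) δ' ≤ δ' := min_le_right _ _
    linarith
  have hcont : ContinuousOn φ (Set.Icc 0 t0) := by
    intro t ht
    have habs : |t| < δ := by
      rw [abs_of_nonneg ht.1]
      exact lt_of_le_of_lt ht.2 ht0δ
    exact ((hd t habs).continuousAt).continuousWithinAt
  have hdiff : ∀ t ∈ Set.Ioo (0:ℝ) t0, HasDerivAt φ (ψ t) t := by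
    intro t ht
    have habs : |t| < δ := by
      rw [abs_of_nonneg ht.1.le]
      exact lt_trans ht.2 ht0δ
    exact hd t habs
  obtain ⟨ξ, hξ, hval⟩ := exists_hasDerivAt_eq_slope φ ψ ht0pos hcont hdiff
  have h1 : ψ ξ < 0 := hsub ⟨hξ.1, lt_trans hξ.2 ht0ε⟩
  have h2 : φ 0 ≤ φ t0 := by
    apply hmin'
    rw [Real.dist_eq, sub_zero, abs_of_nonneg ht0pos.le]
    exact ht0δ'
  rw [hval] at h1
  have : (φ t0 - φ 0) / (t0 - 0) ≥ 0 := by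
    apply div_nonneg <;> linarith
  linarith

lemma hopf_norm_sub_sq {N : ℕ} (x p : EuclideanSpace ℝ (Fin N)) :
    ∑ i, (x i - p i)^2 = ‖x - p‖^2 := by
  rw [EuclideanSpace.norm_eq, Real.sq_sqrt]
  · apply Finset.sum_congr rfl
    intro i _
    simp [Real.norm_eq_abs, sq_abs]
  · exact Finset.sum_nonneg fun i _ => by positivity

lemma hopf_expand {n : ℕ} (ρ : ℝ) (x : EuclideanSpace ℝ (Fin (n+1))) :
    ∑ i, (x i - (ρ • EuclideanSpace.single (Fin.last n) (1:ℝ)) i)^2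
      = ‖x‖^2 - 2*ρ*(x (Fin.last n)) + ρ^2 := by
  have hx : ‖x‖^2 = ∑ i, (x i)^2 := by
    rw [EuclideanSpace.norm_eq, Real.sq_sqrt]
    · exact Finset.sum_congr rfl fun i _ => by simp [Real.norm_eq_abs, sq_abs]
    · exact Finset.sum_nonneg fun i _ => by positivity
  have hp : ∀ i, (ρ • EuclideanSpace.single (Fin.last n) (1:ℝ)) i
      = if i = Fin.last n then ρ else 0 := by
    intro i
    simp [EuclideanSpace.single_apply]
  calc ∑ i, (x i - (ρ • EuclideanSpace.single (Fin.last n) (1:ℝ)) i)^2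
      = ∑ i, ((x i)^2 - 2 * (x i * (if i = Fin.last n then ρ else 0))
          + (if i = Fin.last n then ρ else 0)^2) := by
        apply Finset.sum_congr rfl
        intro i _
        rw [hp i]
        ring
    _ = ‖x‖^2 - 2*ρ*(x (Fin.last n)) + ρ^2 := by
        rw [Finset.sum_add_distrib, Finset.sum_sub_distrib, ← Finset.mul_sum, hx]
        congr 1
        · congr 1
          rw [Finset.sum_congr rfl (fun i (_ : i ∈ Finset.univ) =>
            show x i * (if i = Fin.last n then ρ else 0)
              = if i = Fin.last n then x i * ρ else 0 by split <;> simp)]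
          rw [Finset.sum_ite_eq' Finset.univ (Fin.last n) (fun i => x i * ρ)]
          simp; ring
        · rw [Finset.sum_congr rfl (fun i (_ : i ∈ Finset.univ) =>
            show (if i = Fin.last n then ρ else 0)^2
              = if i = Fin.last n then ρ^2 else 0 by split <;> simp)]
          rw [Finset.sum_ite_eq' Finset.univ (Fin.last n) (fun _ => ρ^2)]
          simp

lemma hopf_line_sq {n : ℕ} (ρ t : ℝ) :
    ∑ i, ((t • EuclideanSpace.single (Fin.last n) (1:ℝ)) i
        - (ρ • EuclideanSpace.single (Fin.last n) (1:ℝ)) i)^2 = (t - ρ)^2 := by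
  have h : ∀ i : Fin (n+1), ((t • EuclideanSpace.single (Fin.last n) (1:ℝ)) i
      - (ρ • EuclideanSpace.single (Fin.last n) (1:ℝ)) i)^2
      = if i = Fin.last n then (t - ρ)^2 else 0 := by
    intro i
    simp only [PiLp.smul_apply, EuclideanSpace.single_apply, smul_eq_mul]
    split <;> simp
  rw [Finset.sum_congr rfl fun i _ => h i,
    Finset.sum_ite_eq' Finset.univ (Fin.last n) (fun _ => (t-ρ)^2)]
  simp

lemma hopf_fderiv_v_differentiable {N : ℕ} (p x : EuclideanSpace ℝ (Fin N)) (α C : ℝ)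
    (j : Fin N) :
    DifferentiableAt ℝ (fun y : EuclideanSpace ℝ (Fin N) =>
      fderiv ℝ (fun z : EuclideanSpace ℝ (Fin N) =>
        Real.exp (-α * ∑ i, (z i - p i)^2) - C) y (EuclideanSpace.single j 1)) x := by
  have hfun : (fun y : EuclideanSpace ℝ (Fin N) =>
      fderiv ℝ (fun z : EuclideanSpace ℝ (Fin N) =>
        Real.exp (-α * ∑ i, (z i - p i)^2) - C) y (EuclideanSpace.single j 1))
      = (fun y : EuclideanSpace ℝ (Fin N) =>
          Real.exp (-α * ∑ i, (y i - p i)^2) * (-2 * α * (y j - p j))) := by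
    funext y; exact hopf_fderiv_v_apply p y α C j
  rw [hfun]
  have ha : HasFDerivAt (fun y : EuclideanSpace ℝ (Fin N) =>
      Real.exp (-α * ∑ i, (y i - p i)^2))
      ((Real.exp (-α * ∑ i, (x i - p i)^2) * (-α)) • hopfD p x) x := by
    simpa using hopf_v_hasFDerivAt p x α 0
  have hb : HasFDerivAt (fun y : EuclideanSpace ℝ (Fin N) => -2 * α * (y j - p j))
      ((-2 * α) • (EuclideanSpace.proj j : EuclideanSpace ℝ (Fin N) →L[ℝ] ℝ)) x := by
    have h1 : HasFDerivAt (fun y : EuclideanSpace ℝ (Fin N) => y j - p j)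
        (EuclideanSpace.proj j : EuclideanSpace ℝ (Fin N) →L[ℝ] ℝ) x := by
      show HasFDerivAt (fun y : EuclideanSpace ℝ (Fin N) =>
        (EuclideanSpace.proj (𝕜 := ℝ) j : EuclideanSpace ℝ (Fin N) →L[ℝ] ℝ) y - p j) _ x
      exact ((EuclideanSpace.proj (𝕜 := ℝ) j).hasFDerivAt (x := x)).sub_const (p j)
    simpa [smul_smul] using h1.const_mul (-2 * α)
  exact (ha.mul hb).differentiableAt

lemma hopf_v_differentiable {N : ℕ} (p x : EuclideanSpace ℝ (Fin N)) (α C : ℝ) :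
    DifferentiableAt ℝ (fun y : EuclideanSpace ℝ (Fin N) =>
      Real.exp (-α * ∑ i, (y i - p i)^2) - C) x :=
  (hopf_v_hasFDerivAt p x α C).differentiableAt

set_option maxHeartbeats 2000000 in
/-- Hopf boundary point lemma on a half-ball: if `h` is continuous on the closed upper
half-ball, positive and superharmonic (`Δh ≤ 0`) on the open upper half-ball, twice
differentiable there, and vanishes on the flat boundary portion, then the inward normal
derivative of `h` at the origin (if it exists) is strictly positive. -/
theorem stmt_7 (n : ℕ) (r : ℝ) (hr : 0 < r)
    (h : EuclideanSpace ℝ (Fin (n + 1)) → ℝ)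
    (hcont : ContinuousOn h {x | ‖x‖ ≤ r ∧ 0 ≤ x (Fin.last n)})
    (hC2 : ContDiffOn ℝ 2 h {x | ‖x‖ < r ∧ 0 < x (Fin.last n)})
    (hpos : ∀ x, ‖x‖ < r → 0 < x (Fin.last n) → 0 < h x)
    (hsuper : ∀ x, ‖x‖ < r → 0 < x (Fin.last n) →
      (∑ i : Fin (n + 1),
          fderiv ℝ (fun y => fderiv ℝ h y (EuclideanSpace.single i 1)) x
            (EuclideanSpace.single i 1)) ≤ 0)
    (hzero : ∀ x, ‖x‖ < r → x (Fin.last n) = 0 → h x = 0) :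
    ∀ d : ℝ,
      HasDerivWithinAt (fun t : ℝ => h (t • EuclideanSpace.single (Fin.last n) 1))
        d (Set.Ici (0:ℝ)) 0 → 0 < d := by
  intro d hd
  set e : EuclideanSpace ℝ (Fin (n+1)) := EuclideanSpace.single (Fin.last n) 1 with he
  set ρ : ℝ := r/4 with hρdef
  have hρ : 0 < ρ := by positivity
  set p : EuclideanSpace ℝ (Fin (n+1)) := ρ • e with hpdef
  set α : ℝ := (2*(n:ℝ)+3)/ρ^2 with hαdef
  have hα : 0 < α := by positivity
  have hαρ : α * ρ^2 = 2*(n:ℝ)+3 := by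
    rw [hαdef]; field_simp
  set C : ℝ := Real.exp (-α*ρ^2) with hCdef
  set v : EuclideanSpace ℝ (Fin (n+1)) → ℝ :=
    fun y => Real.exp (-α * ∑ i, (y i - p i)^2) - C with hvdef
  -- geometric facts
  have hsq : ∀ x : EuclideanSpace ℝ (Fin (n+1)),
      ∑ i, (x i - p i)^2 = ‖x - p‖^2 := fun x => hopf_norm_sub_sq x p
  have hexpand : ∀ x : EuclideanSpace ℝ (Fin (n+1)),
      ∑ i, (x i - p i)^2 = ‖x‖^2 - 2*ρ*(x (Fin.last n)) + ρ^2 := by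
    intro x; rw [hpdef, he]; exact hopf_expand ρ x
  have hline : ∀ t : ℝ, ∑ i, ((t • e) i - p i)^2 = (t - ρ)^2 := by
    intro t; rw [hpdef, he]; exact hopf_line_sq ρ t
  have hplast : p (Fin.last n) = ρ := by
    rw [hpdef, he]; simp [EuclideanSpace.single_apply]
  have hnormp : ‖p‖ = ρ := by
    rw [hpdef, he, norm_smul, EuclideanSpace.norm_single]
    simp [Real.norm_eq_abs, abs_of_pos hρ]
  have hcoord : ∀ x : EuclideanSpace ℝ (Fin (n+1)),
      (x (Fin.last n) - ρ)^2 ≤ ‖x - p‖^2 := by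
    intro x
    rw [← hsq x]
    have h1 := Finset.single_le_sum (f := fun i => (x i - p i)^2)
      (fun i _ => sq_nonneg _) (Finset.mem_univ (Fin.last n))
    simpa [hplast] using h1
  have hKsub : ∀ x : EuclideanSpace ℝ (Fin (n+1)), dist x p ≤ ρ →
      ‖x‖ ≤ r/2 ∧ 0 ≤ x (Fin.last n) := by
    intro x hx
    rw [dist_eq_norm] at hx
    have h2 : ‖x - p‖^2 ≤ ρ^2 := by nlinarith [norm_nonneg (x - p)]
    have h3 := (hcoord x).trans h2
    constructor
    · have h4 : ‖x‖ ≤ ‖x - p‖ + ‖p‖ := by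
        calc ‖x‖ = ‖(x - p) + p‖ := by rw [sub_add_cancel]
        _ ≤ ‖x - p‖ + ‖p‖ := norm_add_le _ _
      rw [hnormp] at h4
      rw [hρdef] at hx h4
      linarith
    · nlinarith
  have hU : ∀ x : EuclideanSpace ℝ (Fin (n+1)), dist x p < ρ →
      ‖x‖ < r ∧ 0 < x (Fin.last n) := by
    intro x hx
    rw [dist_eq_norm] at hx
    have h2 : ‖x - p‖^2 < ρ^2 := by nlinarith [norm_nonneg (x - p)]
    have h3 := lt_of_le_of_lt (hcoord x) h2
    constructor
    · have h4 : ‖x‖ ≤ ‖x - p‖ + ‖p‖ := by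
        calc ‖x‖ = ‖(x - p) + p‖ := by rw [sub_add_cancel]
        _ ≤ ‖x - p‖ + ‖p‖ := norm_add_le _ _
      rw [hnormp] at h4
      rw [hρdef] at hx h4
      linarith [hr]
    · nlinarith
  have hUopen : IsOpen {x : EuclideanSpace ℝ (Fin (n+1)) | ‖x‖ < r ∧ 0 < x (Fin.last n)} := by
    have hlastcont : Continuous (fun x : EuclideanSpace ℝ (Fin (n+1)) => x (Fin.last n)) :=
      (EuclideanSpace.proj (𝕜 := ℝ) (Fin.last n)).continuous
    exact (isOpen_lt continuous_norm continuous_const).inter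
      (isOpen_lt continuous_const hlastcont)
  have hhdiff : ∀ y : EuclideanSpace ℝ (Fin (n+1)), ‖y‖ < r → 0 < y (Fin.last n) →
      DifferentiableAt ℝ h y := by
    intro y h1 h2
    exact (hC2.contDiffAt (hUopen.mem_nhds ⟨h1, h2⟩)).differentiableAt (by norm_num)
  have hvdiff : ∀ y, DifferentiableAt ℝ v y := by
    intro y; rw [hvdef]; exact hopf_v_differentiable p y α C
  have hvcont : Continuous v := by
    have : Differentiable ℝ v := hvdiff
    exact this.continuous
  -- minimum of h on the inner sphere
  have hSne : (Metric.sphere p (ρ/2)).Nonempty := by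
    refine ⟨p + (ρ/2) • e, ?_⟩
    rw [Metric.mem_sphere, dist_eq_norm, add_sub_cancel_left, norm_smul, he,
      EuclideanSpace.norm_single]
    simp [Real.norm_eq_abs, abs_of_pos hρ]
  have hSsub : Metric.sphere p (ρ/2) ⊆ {x | ‖x‖ ≤ r ∧ 0 ≤ x (Fin.last n)} := by
    intro x hx
    have hx' : dist x p = ρ/2 := Metric.mem_sphere.mp hx
    have := hKsub x (by rw [hx']; linarith)
    exact ⟨by linarith [this.1], this.2⟩
  obtain ⟨z, hzS, hzmin⟩ :=
    (isCompact_sphere p (ρ/2)).exists_isMinOn hSne (hcont.mono hSsub)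
  have hzdist : dist z p = ρ/2 := Metric.mem_sphere.mp hzS
  have hzU : ‖z‖ < r ∧ 0 < z (Fin.last n) := hU z (by rw [hzdist]; linarith)
  have hm : 0 < h z := hpos z hzU.1 hzU.2
  set c1 : ℝ := Real.exp (-α*(ρ/2)^2) - C with hc1def
  have hc1 : 0 < c1 := by
    rw [hc1def, hCdef]
    have := Real.exp_lt_exp.mpr (show -α*ρ^2 < -α*(ρ/2)^2 by nlinarith)
    linarith
  set ε : ℝ := h z / c1 with hεdef
  have hε : 0 < ε := div_pos hm hc1
  set w : EuclideanSpace ℝ (Fin (n+1)) → ℝ := fun y => h y - ε * v y with hwdef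
  -- minimum of w on annulus K
  set K : Set (EuclideanSpace ℝ (Fin (n+1))) :=
    Metric.closedBall p ρ \ Metric.ball p (ρ/2) with hKdef
  have hKcompact : IsCompact K := (isCompact_closedBall p ρ).diff Metric.isOpen_ball
  have hzK : z ∈ K := by
    constructor
    · rw [Metric.mem_closedBall, hzdist]; linarith
    · rw [Metric.mem_ball, hzdist]; simp
  have hKsub' : K ⊆ {x | ‖x‖ ≤ r ∧ 0 ≤ x (Fin.last n)} := by
    intro x hx
    have h' := hKsub x (Metric.mem_closedBall.mp hx.1)
    exact ⟨by linarith [h'.1], h'.2⟩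
  have hwcont : ContinuousOn w K :=
    (hcont.mono hKsub').sub ((continuous_const.mul hvcont).continuousOn)
  obtain ⟨x₀, hx₀K, hx₀min⟩ := hKcompact.exists_isMinOn ⟨z, hzK⟩ hwcont
  have hD1 : ρ/2 ≤ dist x₀ p :=
    not_lt.mp (fun hlt => hx₀K.2 (Metric.mem_ball.mpr hlt))
  have hD2 : dist x₀ p ≤ ρ := Metric.mem_closedBall.mp hx₀K.1
  -- claim : 0 ≤ w x₀
  have hwx₀ : 0 ≤ w x₀ := by
    rcases eq_or_lt_of_le hD2 with hDρ | hDlt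
    · -- outer sphere : v = 0 and h ≥ 0
      have hsqx : ∑ i, (x₀ i - p i)^2 = ρ^2 := by
        rw [hsq x₀, ← dist_eq_norm, hDρ]
      have hv0 : v x₀ = 0 := by
        rw [hvdef]; simp only [hsqx, hCdef]; ring
      have hcoords := hKsub x₀ hD2
      have hh0 : 0 ≤ h x₀ := by
        rcases eq_or_lt_of_le hcoords.2 with hlast0 | hlastpos
        · have e1 := hexpand x₀
          rw [hsqx, ← hlast0] at e1
          have hn0 : ‖x₀‖^2 = 0 := by linarith
          have hx00 : x₀ = 0 := by
            rw [← norm_eq_zero]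
            exact (pow_eq_zero_iff (by norm_num : (2:ℕ) ≠ 0)).mp hn0
          rw [hx00, hzero 0 (by rw [norm_zero]; exact hr) (by simp)]
        · exact (hpos x₀ (by linarith [hcoords.1]) hlastpos).le
      rw [hwdef]
      simp only [hv0, mul_zero, sub_zero]
      exact hh0
    · rcases eq_or_lt_of_le hD1 with hDhalf | hDin
      · -- inner sphere
        have hx₀S : x₀ ∈ Metric.sphere p (ρ/2) := Metric.mem_sphere.mpr hDhalf.symm
        have hsqx : ∑ i, (x₀ i - p i)^2 = (ρ/2)^2 := by
          rw [hsq x₀, ← dist_eq_norm, ← hDhalf]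
        have hvx : v x₀ = c1 := by rw [hvdef, hc1def]; simp only [hsqx]
        have hge : h z ≤ h x₀ := hzmin hx₀S
        have hεc1 : ε * c1 = h z := div_mul_cancel₀ (h z) (ne_of_gt hc1)
        rw [hwdef]
        simp only [hvx]
        linarith
      · -- interior minimum : impossible
        exfalso
        set V : Set (EuclideanSpace ℝ (Fin (n+1))) :=
          {x | ρ/2 < dist x p ∧ dist x p < ρ} with hVdef
        have hVopen : IsOpen V := by
          have hdistc : Continuous (fun x : EuclideanSpace ℝ (Fin (n+1)) => dist x p) :=
            continuous_id.dist continuous_const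
          exact (isOpen_lt continuous_const hdistc).inter (isOpen_lt hdistc continuous_const)
        have hx₀V : x₀ ∈ V := ⟨hDin, hDlt⟩
        have hVK : V ⊆ K := by
          intro x hx
          exact ⟨Metric.mem_closedBall.mpr hx.2.le,
            fun hb => absurd (Metric.mem_ball.mp hb) (not_lt.mpr hx.1.le)⟩
        have hVU : ∀ x ∈ V, ‖x‖ < r ∧ 0 < x (Fin.last n) := fun x hx => hU x hx.2
        have hx₀U := hVU x₀ hx₀V
        have hx₀nhdsU : {x : EuclideanSpace ℝ (Fin (n+1)) | ‖x‖ < r ∧ 0 < x (Fin.last n)}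
            ∈ 𝓝 x₀ := hUopen.mem_nhds hx₀U
        have hlocmin : IsLocalMin w x₀ :=
          hx₀min.isLocalMin (Filter.mem_of_superset (hVopen.mem_nhds hx₀V) hVK)
        -- linearity of second derivatives
        have hkey : ∀ i : Fin (n+1),
            DifferentiableAt ℝ
              (fun y => fderiv ℝ w y (EuclideanSpace.single i 1)) x₀ ∧
            fderiv ℝ (fun y => fderiv ℝ w y (EuclideanSpace.single i 1)) x₀
                (EuclideanSpace.single i 1)
              = fderiv ℝ (fun y => fderiv ℝ h y (EuclideanSpace.single i 1)) x₀
                  (EuclideanSpace.single i 1)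
                - ε * fderiv ℝ (fun y => fderiv ℝ v y (EuclideanSpace.single i 1)) x₀
                    (EuclideanSpace.single i 1) := by
          intro i
          have heq : (fun y => fderiv ℝ w y (EuclideanSpace.single i 1)) =ᶠ[𝓝 x₀]
              (fun y => fderiv ℝ h y (EuclideanSpace.single i 1)
                - ε * fderiv ℝ v y (EuclideanSpace.single i 1)) := by
            filter_upwards [hx₀nhdsU] with y hy
            have hdh := hhdiff y hy.1 hy.2
            have hdv : DifferentiableAt ℝ (fun y' => ε * v y') y := (hvdiff y).const_mul ε
            rw [hwdef]
            rw [fderiv_fun_sub hdh hdv, fderiv_const_mul (hvdiff y) ε]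
            simp [ContinuousLinearMap.sub_apply, ContinuousLinearMap.smul_apply]
          have hdA : DifferentiableAt ℝ
              (fun y => fderiv ℝ h y (EuclideanSpace.single i 1)) x₀ := by
            have hC2at : ContDiffAt ℝ 2 h x₀ := hC2.contDiffAt hx₀nhdsU
            have hfd : ContDiffAt ℝ 1 (fderiv ℝ h) x₀ := hC2at.fderiv_right (by norm_num)
            exact (hfd.differentiableAt one_ne_zero).clm_apply (differentiableAt_const _)
          have hdvB : DifferentiableAt ℝ
              (fun y => fderiv ℝ v y (EuclideanSpace.single i 1)) x₀ := by
            rw [hvdef]; exact hopf_fderiv_v_differentiable p x₀ α C i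
          have hdB : DifferentiableAt ℝ
              (fun y => ε * fderiv ℝ v y (EuclideanSpace.single i 1)) x₀ :=
            hdvB.const_mul ε
          constructor
          · rw [heq.differentiableAt_iff]
            exact hdA.sub hdB
          · rw [heq.fderiv_eq, fderiv_fun_sub hdA hdB, fderiv_const_mul hdvB ε]
            simp [ContinuousLinearMap.sub_apply, ContinuousLinearMap.smul_apply]
        -- second derivative test at the interior minimum
        have hsecond : ∀ i : Fin (n+1),
            0 ≤ fderiv ℝ (fun y => fderiv ℝ w y (EuclideanSpace.single i 1)) x₀
              (EuclideanSpace.single i 1) := by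
          intro i
          set u : EuclideanSpace ℝ (Fin (n+1)) := EuclideanSpace.single i 1 with hudef
          have hline_cont : Continuous (fun t : ℝ => x₀ + t • u) :=
            continuous_const.add (continuous_id.smul continuous_const)
          have hpre : (fun t : ℝ => x₀ + t • u) ⁻¹' V ∈ 𝓝 (0:ℝ) := by
            apply hline_cont.continuousAt.preimage_mem_nhds
            have : x₀ + (0:ℝ) • u = x₀ := by simp
            rw [this]
            exact hVopen.mem_nhds hx₀V
          obtain ⟨δ, hδpos, hδsub⟩ := Metric.mem_nhds_iff.mp hpre
          have hwdiffat : ∀ y ∈ V, DifferentiableAt ℝ w y := by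
            intro y hy
            have := (hhdiff y (hVU y hy).1 (hVU y hy).2).sub ((hvdiff y).const_mul ε)
            rw [hwdef]
            exact this
          have hφψ : ∀ t : ℝ, |t| < δ →
              HasDerivAt (fun s : ℝ => w (x₀ + s • u))
                (fderiv ℝ w (x₀ + t • u) u) t := by
            intro t ht
            have htV : x₀ + t • u ∈ V := by
              have : t ∈ Metric.ball (0:ℝ) δ := by
                rw [Metric.mem_ball, Real.dist_eq, sub_zero]; exact ht
              exact hδsub this
            have hw := (hwdiffat _ htV).hasFDerivAt
            have hl : HasDerivAt (fun s : ℝ => x₀ + s • u) u t := by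
              have h1 : HasDerivAt (fun s : ℝ => s • u) u t := by
                simpa using (hasDerivAt_id t).smul_const u
              simpa using h1.const_add x₀
            exact hw.comp_hasDerivAt t hl
          have hψd : HasDerivAt (fun t : ℝ => fderiv ℝ w (x₀ + t • u) u)
              (fderiv ℝ (fun y => fderiv ℝ w y u) x₀ u) 0 := by
            have hB : DifferentiableAt ℝ (fun y => fderiv ℝ w y u) x₀ := (hkey i).1
            have hB' : HasFDerivAt (fun y => fderiv ℝ w y u)
                (fderiv ℝ (fun y => fderiv ℝ w y u) x₀) (x₀ + (0:ℝ) • u) := by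
              rw [show x₀ + (0:ℝ) • u = x₀ by simp]
              exact hB.hasFDerivAt
            have hl : HasDerivAt (fun s : ℝ => x₀ + s • u) u 0 := by
              have h1 : HasDerivAt (fun s : ℝ => s • u) u 0 := by
                simpa using (hasDerivAt_id (0:ℝ)).smul_const u
              simpa using h1.const_add x₀
            exact hB'.comp_hasDerivAt 0 hl
          have hφmin : IsLocalMin (fun t : ℝ => w (x₀ + t • u)) 0 := by
            have hl0 : Filter.Tendsto (fun t : ℝ => x₀ + t • u) (𝓝 0) (𝓝 x₀) := by
              have h2 := (hline_cont.continuousAt (x := (0:ℝ))).tendsto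
              rw [show x₀ + (0:ℝ) • u = x₀ by simp] at h2
              exact h2
            have h1 : ∀ᶠ t in 𝓝 (0:ℝ), w x₀ ≤ w (x₀ + t • u) := hl0.eventually hlocmin
            filter_upwards [h1] with t ht
            simpa using ht
          exact hopf_second_deriv_nonneg hδpos hφψ hψd hφmin
        -- combine
        have hsum0 : 0 ≤ ∑ i : Fin (n+1),
            fderiv ℝ (fun y => fderiv ℝ w y (EuclideanSpace.single i 1)) x₀
              (EuclideanSpace.single i 1) :=
          Finset.sum_nonneg fun i _ => hsecond i
        rw [Finset.sum_congr rfl (fun i _ => (hkey i).2), Finset.sum_sub_distrib,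
          ← Finset.mul_sum] at hsum0
        have hlapv : ∑ i : Fin (n+1),
            fderiv ℝ (fun y => fderiv ℝ v y (EuclideanSpace.single i 1)) x₀
              (EuclideanSpace.single i 1)
            = Real.exp (-α * ∑ i, (x₀ i - p i)^2)
                * (4*α^2 * (∑ i, (x₀ i - p i)^2) - 2*α*((n+1 : ℕ) : ℝ)) := by
          rw [hvdef]
          exact hopf_lap_v p x₀ α C
        rw [hlapv] at hsum0
        have hsqlow : (ρ/2)^2 < ∑ i, (x₀ i - p i)^2 := by
          rw [hsq x₀, ← dist_eq_norm]
          exact pow_lt_pow_left₀ hDin (by positivity) (by norm_num)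
        have hAneg := hsuper x₀ hx₀U.1 hx₀U.2
        have hEpos := Real.exp_pos (-α * ∑ i, (x₀ i - p i)^2)
        have hquad : 2*α*((n+1 : ℕ) : ℝ) < 4*α^2 * (∑ i, (x₀ i - p i)^2) := by
          have h2 : 4*α^2*((ρ/2)^2) = α * (α*ρ^2) := by ring
          rw [hαρ] at h2
          have h3 : 4*α^2*((ρ/2)^2) < 4*α^2*(∑ i, (x₀ i - p i)^2) :=
            mul_lt_mul_of_pos_left hsqlow (by positivity)
          push_cast
          nlinarith
        have hprod : 0 < ε * (Real.exp (-α * ∑ i, (x₀ i - p i)^2)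
            * (4*α^2 * (∑ i, (x₀ i - p i)^2) - 2*α*((n+1 : ℕ) : ℝ))) :=
          mul_pos hε (mul_pos hEpos (by linarith))
        linarith
  -- conclusion via the barrier along the vertical segment
  have hwK : ∀ x ∈ K, 0 ≤ w x := fun x hx => le_trans hwx₀ (hx₀min hx)
  have hgd : HasDerivAt (fun t : ℝ => ε * (Real.exp (-α*(t-ρ)^2) - C))
      (ε * (2*α*ρ * Real.exp (-α*ρ^2))) 0 := by
    have h1 : HasDerivAt (fun t : ℝ => t - ρ) 1 0 := (hasDerivAt_id 0).sub_const ρ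
    have h2 := h1.pow 2
    have h3 := h2.const_mul (-α)
    have h4 := h3.exp
    have h5 := h4.sub_const C
    have h6 := h5.const_mul ε
    refine h6.congr_deriv ?_
    have : ((0:ℝ) - ρ)^2 = ρ^2 := by ring
    simp only [Pi.pow_apply, this]
    ring
  have hc0pos : 0 < ε * (2*α*ρ * Real.exp (-α*ρ^2)) := by positivity
  have hphi : ∀ t : ℝ, 0 < t → t < ρ/2 →
      0 ≤ h (t • e) - ε * (Real.exp (-α*(t-ρ)^2) - C) := by
    intro t ht1 ht2
    have hnorm : ‖t • e - p‖ = ρ - t := by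
      have h1 : ‖t • e - p‖^2 = (t-ρ)^2 := by
        rw [← hsq (t • e)]; exact hline t
      rw [← Real.sqrt_sq (norm_nonneg (t • e - p)), h1, Real.sqrt_sq_eq_abs,
        abs_sub_comm, abs_of_pos (by linarith)]
    have hmemK : t • e ∈ K := by
      constructor
      · rw [Metric.mem_closedBall, dist_eq_norm, hnorm]; linarith
      · rw [Metric.mem_ball, dist_eq_norm, hnorm]; push_neg; linarith
    have h0 := hwK _ hmemK
    rw [hwdef] at h0
    simp only [hvdef, hline t] at h0
    exact h0
  have hφd : HasDerivWithinAt
      (fun t : ℝ => h (t • e) - ε * (Real.exp (-α*(t-ρ)^2) - C))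
      (d - ε * (2*α*ρ * Real.exp (-α*ρ^2))) (Set.Ici 0) 0 :=
    hd.sub hgd.hasDerivWithinAt
  have h00 : h ((0:ℝ) • e) - ε * (Real.exp (-α*((0:ℝ)-ρ)^2) - C) = 0 := by
    have hz0 : h ((0:ℝ) • e) = 0 := by
      rw [zero_smul]
      exact hzero 0 (by rw [norm_zero]; exact hr) (by simp)
    have hC0 : Real.exp (-α*((0:ℝ)-ρ)^2) - C = 0 := by
      rw [show ((0:ℝ)-ρ)^2 = ρ^2 by ring, hCdef, sub_self]
    rw [hz0, hC0, mul_zero, sub_zero]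
  have hfinal := hopf_slope_nonneg (δ := ρ/2) (by positivity) h00 hphi hφd
  linarith
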